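/- arXiv:1705.07370 — 4 statements merged into one kernel-verified Lean document; each statement's English description precedes it below -/
import Mathlib

section
/- Let U be a divisible torsion-free abelian group and let X ⊆ U. Then X is convex if and only if ∏_n X = X^n for every n ≥ 1, i.e., if and only if for every n ≥ 1 the n-fold product set of X equals the set of n-th powers of elements of X. -/
/-- The `n`-fold product set `X ⋯ X` (`n` times) of a subset `X` of a monoid:
the set of all products `x₁ ⋯ xₙ` with `x₁, …, xₙ ∈ X`. -/
def nProdset {G : Type*} [Monoid G] (n : ℕ) (X : Set G) : Set G :=
  {y | ∃ f : Fin n → G, (∀ i, f i ∈ X) ∧ (List.ofFn f).prod = y}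

/-- A subset `X` of an abelian group is convex if for every `a, b ∈ X` and all
`m, n ∈ ℕ` not both zero, every solution `x` of `x ^ (m + n) = a ^ m * b ^ n`
lies in `X`. -/
def IsConvexSubset {G : Type*} [CommGroup G] (X : Set G) : Prop :=
  ∀ a ∈ X, ∀ b ∈ X, ∀ m n : ℕ, ¬(m = 0 ∧ n = 0) →
    ∀ x : G, x ^ (m + n) = a ^ m * b ^ n → x ∈ X

lemma pow_mem_nProdset {G : Type*} [Monoid G] {X : Set G} {a : G} (ha : a ∈ X) (n : ℕ) :
    a ^ n ∈ nProdset n X :=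
  ⟨fun _ => a, fun _ => ha, by simp [List.ofFn_const]⟩

lemma mul_mem_nProdset {G : Type*} [Monoid G] {X : Set G} {x y : G} {m n : ℕ}
    (hx : x ∈ nProdset m X) (hy : y ∈ nProdset n X) : x * y ∈ nProdset (m + n) X := by
  obtain ⟨f, hf, hfp⟩ := hx
  obtain ⟨g, hg, hgp⟩ := hy
  refine ⟨Fin.append f g, fun i => ?_, by simp [List.ofFn_fin_append, hfp, hgp]⟩
  refine Fin.addCases (fun j => ?_) (fun j => ?_) i
  · rw [Fin.append_left]; exact hf j
  · rw [Fin.append_right]; exact hg j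

/-- Let `U` be a divisible torsion-free abelian group and `X ⊆ U`. Then `X` is convex
iff for every `n ≥ 1` the `n`-fold product set of `X` equals the set of `n`-th powers
of elements of `X`. -/
theorem stmt2 (U : Type*) [CommGroup U]
    (hdiv : ∀ u : U, ∀ n : ℕ, 1 ≤ n → ∃ x : U, x ^ n = u)
    (htf : ∀ x : U, ∀ n : ℕ, 1 ≤ n → x ^ n = 1 → x = 1)
    (X : Set U) :
    IsConvexSubset X ↔ ∀ n : ℕ, 1 ≤ n → nProdset n X = (fun x : U => x ^ n) '' X := by
  constructor
  · intro hconv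
    -- forward: by induction
    have key : ∀ n : ℕ, 1 ≤ n → nProdset n X ⊆ (fun x : U => x ^ n) '' X := by
      intro n
      induction n with
      | zero => omega
      | succ k IH =>
        intro _ y hy
        obtain ⟨f, hf, hfp⟩ := hy
        rcases Nat.eq_zero_or_pos k with hk | hk
        · subst hk
          refine ⟨f 0, hf 0, ?_⟩
          simp [← hfp, List.ofFn_succ]
        · have h1 : (List.ofFn fun i => f (Fin.castSucc i)).prod ∈ nProdset k X :=
            ⟨_, fun i => hf _, rfl⟩
          obtain ⟨a, haX, hak⟩ := IH hk h1
          obtain ⟨x, hx⟩ := hdiv y (k + 1) (by omega)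
          have hy' : y = a ^ k * (f (Fin.last k)) ^ 1 := by
            rw [← hfp, List.ofFn_succ' f, List.prod_concat, ← hak, pow_one]
          refine ⟨x, hconv a haX (f (Fin.last k)) (hf _) k 1 (by omega) x (by rw [hx, hy']), hx⟩
    intro n hn
    apply Set.Subset.antisymm (key n hn)
    rintro y ⟨a, haX, rfl⟩
    exact pow_mem_nProdset haX n
  · intro h a haX b hbX m n hmn x hx
    have hmn1 : 1 ≤ m + n := by omega
    have hmem : a ^ m * b ^ n ∈ nProdset (m + n) X :=
      mul_mem_nProdset (pow_mem_nProdset haX m) (pow_mem_nProdset hbX n)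
    rw [h (m + n) hmn1] at hmem
    obtain ⟨c, hcX, hc⟩ := hmem
    have : (x * c⁻¹) ^ (m + n) = 1 := by
      rw [mul_pow, hx, ← hc]
      simp
    have := htf _ _ hmn1 this
    have : x = c := by
      have := mul_inv_eq_one.mp this
      exact this
    rwa [this]
end

section
/- Let U be a divisible torsion-free abelian group, Z ⊆ U a subset, and k ≥ 1. Then the convex hull of the set of k-th roots of Z equals the set of k-th roots of the convex hull of Z; that is, ch(Z^{1/k}) = (ch(Z))^{1/k}, where Z^{1/k} = {x ∈ U : x^k ∈ Z}. -/
/-- The convex hull `ch(X)` of a subset `X` of an abelian group: the set of all `x`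
such that `x ^ n = a₁ ⋯ aₙ` for some `n ≥ 1` and some `a₁, …, aₙ ∈ X`. -/
def convexHullGrp {G : Type*} [CommGroup G] (X : Set G) : Set G :=
  {x | ∃ n : ℕ, 1 ≤ n ∧ ∃ f : Fin n → G, (∀ i, f i ∈ X) ∧ x ^ n = (List.ofFn f).prod}

/-- Let `U` be a divisible torsion-free abelian group, `Z ⊆ U` and `k ≥ 1`. Then the
convex hull of the set of `k`-th roots of `Z` equals the set of `k`-th roots of the
convex hull of `Z`: `ch(Z^{1/k}) = (ch(Z))^{1/k}`. -/
theorem stmt3 (U : Type*) [CommGroup U]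
    (hdiv : ∀ u : U, ∀ n : ℕ, 1 ≤ n → ∃ x : U, x ^ n = u)
    (htf : ∀ x : U, ∀ n : ℕ, 1 ≤ n → x ^ n = 1 → x = 1)
    (Z : Set U) (k : ℕ) (hk : 1 ≤ k) :
    convexHullGrp {x : U | x ^ k ∈ Z} = {x : U | x ^ k ∈ convexHullGrp Z} := by
  ext x
  constructor
  · rintro ⟨n, hn, f, hf, hx⟩
    exact ⟨n, hn, fun i => (f i) ^ k, fun i => hf i, by
      simp only [List.prod_ofFn] at hx ⊢
      rw [← pow_mul, mul_comm, pow_mul, hx, Finset.prod_pow]⟩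
  · rintro ⟨n, hn, f, hf, hx⟩
    choose g hg using fun i => hdiv (f i) k hk
    refine ⟨n, hn, g, fun i => by simp only [Set.mem_setOf_eq, hg i]; exact hf i, ?_⟩
    have h : (x ^ n / (List.ofFn g).prod) ^ k = 1 := by
      rw [div_pow, ← pow_mul, mul_comm, pow_mul, hx]
      simp only [List.prod_ofFn, ← Finset.prod_pow]
      simp [hg, div_self']
    have := htf _ k hk h
    exact div_eq_one.mp this
end

section
/- Let U be a divisible torsion-free abelian group, let Z, X ⊆ U be subsets, and let k ≥ 1. If the convex hull ch(Z) of Z is contained in X^k = {x^k : x ∈ X}, then the convex hull ch(Z^{1/k}) of the set Z^{1/k} = {u ∈ U : u^k ∈ Z} of k-th roots of Z is contained in X. -/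
/-- Let `U` be a divisible torsion-free abelian group, `Z, X ⊆ U` and `k ≥ 1`. If
`ch(Z) ⊆ X^k = {x^k : x ∈ X}`, then `ch(Z^{1/k}) ⊆ X`, where
`Z^{1/k} = {u ∈ U : u^k ∈ Z}`. -/
theorem stmt4 (U : Type*) [CommGroup U]
    (hdiv : ∀ u : U, ∀ n : ℕ, 1 ≤ n → ∃ x : U, x ^ n = u)
    (htf : ∀ x : U, ∀ n : ℕ, 1 ≤ n → x ^ n = 1 → x = 1)
    (Z X : Set U) (k : ℕ) (hk : 1 ≤ k)
    (hZX : convexHullGrp Z ⊆ (fun x : U => x ^ k) '' X) :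
    convexHullGrp {u : U | u ^ k ∈ Z} ⊆ X := by
  intro x hx
  obtain ⟨n, hn, f, hf, hprod⟩ := hx
  have hxk : x ^ k ∈ convexHullGrp Z := by
    refine ⟨n, hn, fun i => f i ^ k, fun i => hf i, ?_⟩
    have : List.ofFn (fun i => f i ^ k) = (List.ofFn f).map (powMonoidHom k : U →* U) := by
      rw [List.map_ofFn]; rfl
    rw [this, List.prod_hom _ (powMonoidHom k : U →* U), ← hprod, powMonoidHom_apply,
      ← pow_mul, ← pow_mul, Nat.mul_comm]
  obtain ⟨y, hy, hyk⟩ := hZX hxk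
  have : (x * y⁻¹) ^ k = 1 := by
    simp only at hyk
    rw [mul_pow, inv_pow, hyk]
    simp
  have := htf _ k hk this
  have hxy : x = y := by
    have := mul_inv_eq_one.mp this
    exact this
  rwa [hxy]
end

section
/- Let Z be a divisible torsion-free abelian group with identity e, and let V be an abelian group. Let W ⊆ Z and let θ : W → V be a local homomorphism. Suppose W₁ ⊆ Z is a symmetric subset (W₁⁻¹ = W₁) with e ∈ W₁ that generates Z (every element of Z is a finite product of elements of W₁), and suppose k ≥ 1 is such that ch(W₁^{1/k}) ⊆ W₁ ⊆ W, where W₁^{1/k} = {x ∈ Z : x^k ∈ W₁}. Then there exists a unique group homomorphism θ̄ : Z → V such that θ̄(x) = θ(x) for every x ∈ ch(W₁^{1/k}); moreover θ̄ is given by θ̄(y₁⋯yₙ) = (θ(y₁^{1/k})⋯θ(yₙ^{1/k}))^k for all n ≥ 1 and y₁,…,yₙ ∈ W₁, where y^{1/k} denotes the unique k-th root of y in Z. -/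
open Pointwise

private lemma aux_prod_pow {M : Type*} [CommMonoid M] (l : List M) (k : ℕ) :
    l.prod ^ k = (l.map (· ^ k)).prod := by
  induction l with
  | nil => simp
  | cons a l ih => simp [mul_pow, ih]

private lemma aux_rep {M : Type*} [CommMonoid M] (l : List M) (c : ℕ) :
    ∃ L : List M, L.length = c * l.length ∧ L.prod = l.prod ^ c ∧ ∀ a ∈ L, a ∈ l := by
  induction c with
  | zero => exact ⟨[], by simp, by simp, by simp⟩
  | succ c ih =>
    obtain ⟨L, h1, h2, h3⟩ := ih
    refine ⟨l ++ L, by simp [h1, Nat.succ_mul, Nat.add_comm], ?_, ?_⟩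
    · rw [List.prod_append, h2, pow_succ, mul_comm]
    · intro a ha
      rcases List.mem_append.mp ha with h | h
      · exact h
      · exact h3 a h

private lemma aux_mem_ch {G : Type*} [CommGroup G] (X : Set G) (x : G) :
    x ∈ convexHullGrp X ↔
      ∃ l : List G, l ≠ [] ∧ (∀ a ∈ l, a ∈ X) ∧ x ^ l.length = l.prod := by
  constructor
  · rintro ⟨n, hn, f, hf, hx⟩
    refine ⟨List.ofFn f, List.ne_nil_of_length_pos (by rw [List.length_ofFn]; omega), ?_, ?_⟩
    · intro a ha
      obtain ⟨i, rfl⟩ := List.mem_ofFn.mp ha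
      exact hf i
    · rw [List.length_ofFn]; exact hx
  · rintro ⟨l, hl, hX, hx⟩
    refine ⟨l.length, List.length_pos_iff.mpr hl, l.get, fun i => hX _ (l.get_mem i), ?_⟩
    rw [List.ofFn_get]; exact hx

private lemma aux_convex {G : Type*} [CommGroup G] (X : Set G) (h1 : (1 : G) ∈ X)
    {u v : G} (hu : u ∈ convexHullGrp X) (hv : v ∈ convexHullGrp X)
    (α β γ : ℕ) (hγ : 1 ≤ γ) (hαβ : α + β ≤ γ) (w : G) (hw : w ^ γ = u ^ α * v ^ β) :
    w ∈ convexHullGrp X := by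
  rw [aux_mem_ch] at hu hv ⊢
  obtain ⟨lu, hlu0, hluX, hlu⟩ := hu
  obtain ⟨lv, hlv0, hlvX, hlv⟩ := hv
  obtain ⟨Lu, hLul, hLup, hLum⟩ := aux_rep lu (α * lv.length)
  obtain ⟨Lv, hLvl, hLvp, hLvm⟩ := aux_rep lv (β * lu.length)
  obtain ⟨δ, rfl⟩ : ∃ δ, γ = α + β + δ := ⟨γ - (α + β), by omega⟩
  have hn : 0 < lu.length := List.length_pos_iff.mpr hlu0
  have hm : 0 < lv.length := List.length_pos_iff.mpr hlv0
  refine ⟨Lu ++ Lv ++ List.replicate (δ * (lu.length * lv.length)) 1, ?_, ?_, ?_⟩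
  · apply List.ne_nil_of_length_pos
    simp only [List.length_append, List.length_replicate, hLul, hLvl]
    have : 0 < lu.length * lv.length := Nat.mul_pos hn hm
    nlinarith
  · intro a ha
    rcases List.mem_append.mp ha with h | h
    · rcases List.mem_append.mp h with h' | h'
      · exact hluX a (hLum a h')
      · exact hlvX a (hLvm a h')
    · rw [List.mem_replicate] at h
      rw [h.2]; exact h1
  · simp only [List.length_append, List.length_replicate, hLul, hLvl,
      List.prod_append, hLup, hLvp, List.prod_replicate, one_pow, mul_one]
    rw [← hlu, ← hlv, ← pow_mul, ← pow_mul]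
    rw [show α * lv.length * lu.length + β * lu.length * lv.length + δ * (lu.length * lv.length)
        = (α + β + δ) * (lu.length * lv.length) from by ring]
    rw [pow_mul w, hw, mul_pow, ← pow_mul, ← pow_mul]
    rw [show α * (lu.length * lv.length) = lu.length * (α * lv.length) by ring,
      show β * (lu.length * lv.length) = lv.length * (β * lu.length) by ring]

/-- Let `Z` be a divisible torsion-free abelian group with identity `e` and `V` an abelian
group. Let `W ⊆ Z` and `θ : W → V` a local homomorphism. Suppose `W₁ ⊆ Z` is a symmetric
subset (`W₁⁻¹ = W₁`) with `e ∈ W₁` generating `Z` (every element of `Z` is a finite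
product of elements of `W₁`), and `k ≥ 1` is such that `ch(W₁^{1/k}) ⊆ W₁ ⊆ W`. Then
there is a unique group homomorphism `θ̄ : Z → V` with `θ̄ = θ` on `ch(W₁^{1/k})`;
moreover `θ̄(y₁⋯yₙ) = (θ(y₁^{1/k})⋯θ(yₙ^{1/k}))^k` for all `n ≥ 1` and `y₁, …, yₙ ∈ W₁`,
where `y^{1/k}` denotes the unique `k`-th root of `y` in `Z`. -/
theorem stmt5 (Z V : Type*) [CommGroup Z] [CommGroup V]
    (hdiv : ∀ z : Z, ∀ n : ℕ, 1 ≤ n → ∃ x : Z, x ^ n = z)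
    (htf : ∀ x : Z, ∀ n : ℕ, 1 ≤ n → x ^ n = 1 → x = 1)
    (W W₁ : Set Z) (θ : Z → V)
    (hθloc : ∀ x y : Z, x ∈ W → y ∈ W → x * y ∈ W → θ (x * y) = θ x * θ y)
    (hsym : W₁⁻¹ = W₁) (hone : (1 : Z) ∈ W₁)
    (hgen : ∀ z : Z, ∃ n : ℕ, 1 ≤ n ∧ ∃ f : Fin n → Z,
      (∀ i, f i ∈ W₁) ∧ (List.ofFn f).prod = z)
    (k : ℕ) (hk : 1 ≤ k)
    (hch : convexHullGrp {x : Z | x ^ k ∈ W₁} ⊆ W₁) (hW₁W : W₁ ⊆ W) :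
    ∃ θbar : Z →* V,
      (∀ x ∈ convexHullGrp {x : Z | x ^ k ∈ W₁}, θbar x = θ x) ∧
      (∀ ψ : Z →* V, (∀ x ∈ convexHullGrp {x : Z | x ^ k ∈ W₁}, ψ x = θ x) → ψ = θbar) ∧
      (∀ n : ℕ, 1 ≤ n → ∀ f g : Fin n → Z, (∀ i, f i ∈ W₁) → (∀ i, (g i) ^ k = f i) →
        θbar ((List.ofFn f).prod) = ((List.ofFn fun i => θ (g i)).prod) ^ k) := by
  classical
  set S : Set Z := {x : Z | x ^ k ∈ W₁} with hSdef
  set T : Set Z := convexHullGrp S with hTdef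
  -- basic facts
  have hinj : ∀ (x y : Z) (n : ℕ), 1 ≤ n → x ^ n = y ^ n → x = y := by
    intro x y n hn h
    have h1 : (x * y⁻¹) ^ n = 1 := by
      rw [mul_pow, h, inv_pow, mul_inv_cancel]
    have := htf _ n hn h1
    rwa [mul_inv_eq_one] at this
  have hmulpos : ∀ a b : ℕ, 1 ≤ a → 1 ≤ b → 1 ≤ a * b := by
    intro a b ha hb; exact Nat.mul_pos ha hb
  -- k-th roots
  choose r hr using fun z : Z => hdiv z k hk
  have h1S : (1 : Z) ∈ S := by simp [hSdef, hone]
  have hTsubW₁ : ∀ x ∈ T, x ∈ W₁ := fun x hx => hch hx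
  have hTsubW : ∀ x ∈ T, x ∈ W := fun x hx => hW₁W (hch hx)
  have hθ1 : θ 1 = 1 := by
    have h1W : (1 : Z) ∈ W := hW₁W hone
    have h := hθloc 1 1 h1W h1W (by simpa using h1W)
    rw [mul_one] at h
    have := h.symm
    rwa [mul_eq_left] at this
  have h1T : (1 : Z) ∈ T := ⟨1, le_refl 1, fun _ => 1, fun _ => h1S, by simp⟩
  have hSsubT : ∀ x ∈ S, x ∈ T := fun x hx => ⟨1, le_refl 1, fun _ => x, fun _ => hx, by simp⟩
  have hinvS : ∀ x ∈ S, x⁻¹ ∈ S := by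
    intro x hx
    show (x⁻¹) ^ k ∈ W₁
    rw [inv_pow, ← hsym]
    exact Set.inv_mem_inv.mpr hx
  have hinvT : ∀ x ∈ T, x⁻¹ ∈ T := by
    intro x hx
    rw [hTdef, aux_mem_ch] at hx ⊢
    obtain ⟨l, hl0, hlX, hl⟩ := hx
    refine ⟨l.map (·⁻¹), by simpa using hl0, ?_, ?_⟩
    · intro a ha
      rw [List.mem_map] at ha
      obtain ⟨b, hb, rfl⟩ := ha
      exact hinvS b (hlX b hb)
    · rw [List.length_map]
      have hpi : ∀ m : List Z, (m.map (·⁻¹)).prod = m.prod⁻¹ := by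
        intro m
        induction m with
        | nil => simp
        | cons a m ih => simp [ih, mul_inv, mul_comm]
      rw [hpi, ← hl, inv_pow]
  -- list version of T-membership
  have hTlist : ∀ (w : Z) (l : List Z), l ≠ [] → (∀ a ∈ l, a ∈ S) →
      w ^ l.length = l.prod → w ∈ T := by
    intro w l h1 h2 h3
    rw [hTdef, aux_mem_ch]
    exact ⟨l, h1, h2, h3⟩
  have hcvx : ∀ u v : Z, u ∈ T → v ∈ T → ∀ α β γ : ℕ, 1 ≤ γ → α + β ≤ γ →
      ∀ w : Z, w ^ γ = u ^ α * v ^ β → w ∈ T := by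
    intro u v hu hv α β γ h1 h2 w hw
    exact aux_convex S h1S hu hv α β γ h1 h2 w hw
  -- closure of T under roots of products of elements of T
  have hTclose : ∀ l : List Z, l ≠ [] → (∀ a ∈ l, a ∈ T) →
      ∀ w : Z, w ^ l.length = l.prod → w ∈ T := by
    intro l
    induction l with
    | nil => intro h; exact absurd rfl h
    | cons a l ih =>
      intro _ hmem w hw
      have haT : a ∈ T := hmem a (List.mem_cons_self)
      rcases eq_or_ne l [] with rfl | hl
      · simp only [List.length_cons, List.length_nil, zero_add, pow_one, List.prod_cons,
          List.prod_nil, mul_one] at hw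
        rwa [hw]
      · have hlen : 1 ≤ l.length := List.length_pos_iff.mpr hl
        obtain ⟨u, hu⟩ := hdiv l.prod l.length hlen
        have huT : u ∈ T := ih hl (fun x hx => hmem x (List.mem_cons_of_mem a hx)) u hu
        refine hcvx a u haT huT 1 l.length (l.length + 1) (by omega) (by omega) w ?_
        rw [pow_one, hu]
        simpa [List.prod_cons] using hw
  -- the key pairwise lemma
  have hB : ∀ u v : Z, u ∈ T → v ∈ T → ∀ p q : ℕ, 1 ≤ p + q →
      ∀ c : Z, c ^ (p + q) = u ^ p * v ^ q → θ u ^ p * θ v ^ q = θ c ^ (p + q) := by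
    intro u v huT hvT p q hpq c hc
    by_cases hN1 : p + q = 1
    · rcases (by omega : p = 1 ∧ q = 0 ∨ p = 0 ∧ q = 1) with ⟨rfl, rfl⟩ | ⟨rfl, rfl⟩
      · simp only [pow_one, pow_zero, mul_one, Nat.add_zero] at hc ⊢
        rw [hc]
      · simp only [pow_one, pow_zero, one_mul, Nat.zero_add] at hc ⊢
        rw [hc]
    · have hN2 : 2 ≤ p + q := by omega
      obtain ⟨d, hd⟩ := hdiv (u * v⁻¹) (p + q) (by omega)
      have hdT : d ∈ T := hcvx u v⁻¹ huT (hinvT v hvT) 1 1 (p + q) (by omega) (by omega) d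
        (by simpa using hd)
      -- the computation of the powers of the intermediate points
      have hpow : ∀ j, j ≤ p + q → (v * d ^ j) ^ (p + q) = u ^ j * v ^ (p + q - j) := by
        intro j hj
        have key : (v * d ^ j) ^ (p + q) * v ^ j = u ^ j * v ^ (p + q - j) * v ^ j := by
          have e1 : (v * d ^ j) ^ (p + q) = v ^ (p + q) * (u * v⁻¹) ^ j := by
            rw [mul_pow, ← pow_mul, mul_comm j (p + q), pow_mul, hd]
          rw [e1, mul_pow, inv_pow, mul_assoc, mul_assoc, inv_mul_cancel, mul_one,
            mul_assoc, ← pow_add]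
          rw [show p + q - j + j = p + q from by omega]
          rw [mul_comm (v ^ (p + q)) (u ^ j)]
        exact mul_right_cancel key
      have hej : ∀ j, j ≤ p + q → v * d ^ j ∈ T := by
        intro j hj
        exact hcvx u v huT hvT j (p + q - j) (p + q) (by omega) (by omega) _ (hpow j hj)
      have htel : ∀ j, j ≤ p + q → θ (v * d ^ j) = θ v * θ d ^ j := by
        intro j
        induction j with
        | zero => intro _; simp
        | succ i ihh =>
          intro hij
          have h1 := ihh (by omega)
          have hx : v * d ^ i ∈ W := hTsubW _ (hej i (by omega))
          have hy : d ∈ W := hTsubW _ hdT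
          have hxy : (v * d ^ i) * d ∈ W := by
            have : v * d ^ (i + 1) ∈ W := hTsubW _ (hej (i + 1) hij)
            rwa [pow_succ, ← mul_assoc] at this
          have hstep := hθloc (v * d ^ i) d hx hy hxy
          rw [pow_succ, ← mul_assoc, hstep, h1, pow_succ, mul_assoc]
      -- identify u and c
      have hu2 : v * d ^ (p + q) = u := by
        rw [hd, mul_comm u v⁻¹, ← mul_assoc, mul_inv_cancel, one_mul]
      have hc2 : c = v * d ^ p := by
        refine hinj c (v * d ^ p) (p + q) (by omega) ?_
        rw [hpow p (by omega), hc]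
        congr 2
        omega
      have hθu : θ u = θ v * θ d ^ (p + q) := by
        rw [← hu2]; exact htel (p + q) le_rfl
      have hθc : θ c = θ v * θ d ^ p := by
        rw [hc2]; exact htel p (by omega)
      rw [hθu, hθc, mul_pow, mul_pow, ← pow_mul, ← pow_mul, mul_right_comm, ← pow_add,
        mul_comm (p + q) p]
  -- power transfer on T
  have hE : ∀ c : Z, c ∈ T → ∀ m : ℕ, 1 ≤ m → ∀ d : Z, d ^ m = c → θ c = θ d ^ m := by
    intro c hc m hm d hd
    obtain ⟨m', rfl⟩ : ∃ m', m = 1 + m' := ⟨m - 1, by omega⟩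
    have hb := hB c 1 hc h1T 1 m' (by omega) d (by rw [pow_one, one_pow, mul_one]; exact hd)
    simpa [hθ1] using hb
  -- n-fold lemma
  have hC : ∀ l : List Z, l ≠ [] → (∀ a ∈ l, a ∈ T) →
      ∀ w : Z, w ^ l.length = l.prod → (l.map θ).prod = θ w ^ l.length := by
    intro l
    induction l with
    | nil => intro h; exact absurd rfl h
    | cons a l ih =>
      intro _ hmem w hw
      have haT : a ∈ T := hmem a (List.mem_cons_self)
      rcases eq_or_ne l [] with rfl | hl
      · simp only [List.length_cons, List.length_nil, zero_add, pow_one, List.prod_cons,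
          List.prod_nil, mul_one] at hw
        simp [hw]
      · have hlen : 1 ≤ l.length := List.length_pos_iff.mpr hl
        obtain ⟨u, hu⟩ := hdiv l.prod l.length hlen
        have hmem' : ∀ x ∈ l, x ∈ T := fun x hx => hmem x (List.mem_cons_of_mem a hx)
        have huT : u ∈ T := hTclose l hl hmem' u hu
        have ihm := ih hl hmem' u hu
        have hb := hB a u haT huT 1 l.length (by omega) w ?_
        · simp only [List.map_cons, List.prod_cons, List.length_cons]
          rw [ihm]
          rw [pow_one] at hb
          rw [hb]
          congr 1
          omega
        · rw [pow_one, hu, show 1 + l.length = l.length + 1 from by omega]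
          simpa [List.prod_cons] using hw
  -- membership from representations by elements of W₁
  have hD : ∀ l : List Z, l ≠ [] → (∀ y ∈ l, y ∈ W₁) →
      ∀ e : Z, e ^ (k * l.length) = l.prod → e ∈ T := by
    intro l hl hlW e he
    have hgS : ∀ a ∈ l.map r, a ∈ S := by
      intro a ha
      rw [List.mem_map] at ha
      obtain ⟨y, hy, rfl⟩ := ha
      show (r y) ^ k ∈ W₁
      rw [hr y]
      exact hlW y hy
    have hgprod : (l.map r).prod ^ k = l.prod := by
      rw [aux_prod_pow, List.map_map]
      have hcomp : ((· ^ k) ∘ r : Z → Z) = id := funext fun y => hr y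
      rw [hcomp, List.map_id]
    have hen : e ^ l.length = (l.map r).prod := by
      refine hinj _ _ k hk ?_
      rw [← pow_mul, mul_comm l.length k, he, hgprod]
    refine hTlist e (l.map r) ?_ hgS ?_
    · apply List.ne_nil_of_length_pos
      rw [List.length_map]
      exact List.length_pos_iff.mpr hl
    · rw [List.length_map]
      exact hen
  -- representations
  have hrepl : ∀ z : Z, ∃ l : List Z, l ≠ [] ∧ (∀ y ∈ l, y ∈ W₁) ∧ l.prod = z := by
    intro z
    obtain ⟨n, hn, f, hf, hp⟩ := hgen z
    refine ⟨List.ofFn f, List.ne_nil_of_length_pos (by rw [List.length_ofFn]; omega), ?_, hp⟩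
    intro y hy
    obtain ⟨i, rfl⟩ := List.mem_ofFn.mp hy
    exact hf i
  choose L hLne hLW hLprod using hrepl
  have hLpos : ∀ z : Z, 1 ≤ k * (L z).length :=
    fun z => hmulpos _ _ hk (List.length_pos_iff.mpr (hLne z))
  choose c hcr using fun z : Z => hdiv z (k * (L z).length) (hLpos z)
  set Phi : Z → V := fun z => θ (c z) ^ (k * (L z).length) with hPhi
  have hcT : ∀ z : Z, c z ∈ T := by
    intro z
    refine hD (L z) (hLne z) (hLW z) (c z) ?_
    rw [hLprod z]
    exact hcr z
  -- representation independence
  have hF : ∀ z : Z, ∀ l : List Z, l ≠ [] → (∀ y ∈ l, y ∈ W₁) → l.prod = z →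
      ∀ e : Z, e ^ (k * l.length) = z → Phi z = θ e ^ (k * l.length) := by
    intro z l hl hlW hlp e he
    have heT : e ∈ T := hD l hl hlW e (by rw [hlp]; exact he)
    have hN₁ : 1 ≤ k * (L z).length := hLpos z
    have hN₂ : 1 ≤ k * l.length := hmulpos _ _ hk (List.length_pos_iff.mpr hl)
    obtain ⟨rho, hrho⟩ := hdiv z ((k * (L z).length) * (k * l.length)) (hmulpos _ _ hN₁ hN₂)
    have h1 : c z = rho ^ (k * l.length) := by
      refine hinj _ _ (k * (L z).length) hN₁ ?_
      rw [hcr z, ← pow_mul, mul_comm (k * l.length) (k * (L z).length), hrho]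
    have h2 : e = rho ^ (k * (L z).length) := by
      refine hinj _ _ (k * l.length) hN₂ ?_
      rw [he, ← pow_mul, hrho]
    have e1 : θ (c z) = θ rho ^ (k * l.length) := hE (c z) (hcT z) _ hN₂ rho h1.symm
    have e2 : θ e = θ rho ^ (k * (L z).length) := hE e heT _ hN₁ rho h2.symm
    show θ (c z) ^ (k * (L z).length) = θ e ^ (k * l.length)
    rw [e1, e2, ← pow_mul, ← pow_mul, mul_comm]
  -- multiplicativity
  have hmul : ∀ a b : Z, Phi (a * b) = Phi a * Phi b := by
    intro a b
    have hla : 1 ≤ (L a).length := List.length_pos_iff.mpr (hLne a)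
    have hlb : 1 ≤ (L b).length := List.length_pos_iff.mpr (hLne b)
    obtain ⟨e, he⟩ := hdiv (a * b) (k * ((L a).length + (L b).length))
      (hmulpos _ _ hk (by omega))
    have hb := hB (c a) (c b) (hcT a) (hcT b) (k * (L a).length) (k * (L b).length)
      (by have := hLpos a; omega) e ?_
    · have hF' := hF (a * b) (L a ++ L b) ?_ ?_ ?_ e ?_
      · rw [hF', List.length_append, Nat.mul_add, ← hb]
      · intro h
        exact (hLne a) (List.append_eq_nil_iff.mp h).1
      · intro y hy
        rcases List.mem_append.mp hy with h | h
        · exact hLW a y h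
        · exact hLW b y h
      · rw [List.prod_append, hLprod a, hLprod b]
      · rw [List.length_append]
        exact he
    · rw [hcr a, hcr b, ← he]
      congr 1
      ring
  refine ⟨MonoidHom.mk' Phi hmul, ?_, ?_, ?_⟩
  · -- agreement on T
    intro x hx
    have hxT : x ∈ T := hx
    have hxW₁ : x ∈ W₁ := hTsubW₁ x hxT
    have h1 : Phi x = θ (r x) ^ (k * ([x] : List Z).length) := by
      refine hF x [x] (by simp) ?_ (by simp) (r x) ?_
      · intro y hy
        rw [List.mem_singleton] at hy
        rw [hy]; exact hxW₁
      · simp [hr x]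
    have h2 : θ x = θ (r x) ^ k := hE x hxT k hk (r x) (hr x)
    show Phi x = θ x
    rw [h1, h2]
    simp
  · -- uniqueness
    intro psi hpsi
    ext z
    have h1 : psi z = psi (c z) ^ (k * (L z).length) := by
      rw [← map_pow, hcr z]
    show psi z = Phi z
    rw [h1, hpsi (c z) (hcT z)]
  · -- the formula
    intro n hn f g hf hgk
    have hlen : (List.ofFn f).length = n := List.length_ofFn
    have hnil : (List.ofFn f) ≠ [] := List.ne_nil_of_length_pos (by rw [hlen]; omega)
    obtain ⟨e, he⟩ := hdiv ((List.ofFn f).prod) (k * n) (hmulpos _ _ hk hn)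
    have h1 : Phi ((List.ofFn f).prod) = θ e ^ (k * n) := by
      have hFa := hF ((List.ofFn f).prod) (List.ofFn f) hnil ?_ rfl e ?_
      · rwa [hlen] at hFa
      · intro y hy
        obtain ⟨i, rfl⟩ := List.mem_ofFn.mp hy
        exact hf i
      · rw [hlen]; exact he
    have hlgprod : (List.ofFn g).prod ^ k = (List.ofFn f).prod := by
      rw [aux_prod_pow, List.map_ofFn]
      have hcomp : ((· ^ k) ∘ g : Fin n → Z) = f := funext fun i => hgk i
      rw [hcomp]
    have hen : e ^ n = (List.ofFn g).prod := by
      refine hinj _ _ k hk ?_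
      rw [← pow_mul, mul_comm n k, he, hlgprod]
    have hgT : ∀ a ∈ List.ofFn g, a ∈ T := by
      intro a ha
      obtain ⟨i, rfl⟩ := List.mem_ofFn.mp ha
      refine hSsubT _ ?_
      show (g i) ^ k ∈ W₁
      rw [hgk i]
      exact hf i
    have hCc := hC (List.ofFn g) (List.ne_nil_of_length_pos (by rw [List.length_ofFn]; omega))
      hgT e (by rw [List.length_ofFn]; exact hen)
    rw [List.length_ofFn] at hCc
    have hmapg : (List.ofFn fun i => θ (g i)) = (List.ofFn g).map θ := by
      rw [List.map_ofFn]
      rfl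
    show Phi ((List.ofFn f).prod) = _
    rw [h1, hmapg, hCc, ← pow_mul, mul_comm n k]
end
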